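/- Let P0 be a strictly positive probability mass function on a finite set Z, s : Z → ℝ, and c ∈ ℝ with min_z s(z) < c < max_z s(z). Then there exists λ ∈ ℝ such that E_{P_λ}[s] = c, where P_λ(z) = P0(z)exp(λ s(z))/Z(λ). Moreover λ is unique if s is not P0-almost-surely constant. -/

import Mathlib

open Finset Real

private lemma aux_above {Z : Type*} [Fintype Z] [Nonempty Z]
    (P0 : Z → ℝ) (hpos : ∀ z, 0 < P0 z) (s : Z → ℝ) (c : ℝ)
    (zs : Z) (hc : c < s zs) :
    ∃ b : ℝ, c * (∑ z, P0 z * Real.exp (b * s z)) <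
      ∑ z, P0 z * Real.exp (b * s z) * s z := by
  classical
  set M := s zs with hM
  set C : ℝ := ∑ z ∈ Finset.univ.erase zs, P0 z * (s z - c) with hC
  have hMc : 0 < M - c := sub_pos.2 hc
  have h1 : Filter.Tendsto (fun l : ℝ => P0 zs * Real.exp (l * (M - c)) * (M - c) + C)
      Filter.atTop Filter.atTop := by
    apply Filter.tendsto_atTop_add_const_right
    apply Filter.Tendsto.atTop_mul_const hMc
    apply Filter.Tendsto.const_mul_atTop (hpos zs)
    exact Real.tendsto_exp_atTop.comp (Filter.tendsto_id.atTop_mul_const hMc)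
  obtain ⟨b, hb0, hbpos⟩ := ((Filter.eventually_ge_atTop (0:ℝ)).and
    (h1.eventually_gt_atTop 0)).exists
  refine ⟨b, ?_⟩
  rw [← sub_pos]
  have key : ∑ z, P0 z * Real.exp (b * s z) * s z
      - c * ∑ z, P0 z * Real.exp (b * s z)
      = ∑ z, P0 z * Real.exp (b * s z) * (s z - c) := by
    rw [Finset.mul_sum, ← Finset.sum_sub_distrib]; congr 1; ext z; ring
  rw [key]
  rw [← Finset.sum_erase_add _ _ (Finset.mem_univ zs)]
  have hlow : ∀ z ∈ Finset.univ.erase zs,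
      Real.exp (b * c) * (P0 z * (s z - c)) ≤ P0 z * Real.exp (b * s z) * (s z - c) := by
    intro z _
    have hsame : 0 ≤ (Real.exp (b * s z) - Real.exp (b * c)) * (s z - c) := by
      rcases le_total c (s z) with h | h
      · exact mul_nonneg (sub_nonneg.2 (Real.exp_le_exp.2 (by nlinarith))) (by linarith)
      · exact mul_nonneg_of_nonpos_of_nonpos
          (sub_nonpos.2 (Real.exp_le_exp.2 (by nlinarith))) (by linarith)
    nlinarith [hpos z]
  have hsum_low : Real.exp (b * c) * C ≤
      ∑ z ∈ Finset.univ.erase zs, P0 z * Real.exp (b * s z) * (s z - c) := by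
    rw [hC, Finset.mul_sum]
    exact Finset.sum_le_sum hlow
  have hzs : P0 zs * Real.exp (b * M) * (M - c)
      = Real.exp (b * c) * (P0 zs * Real.exp (b * (M - c)) * (M - c)) := by
    rw [show b * M = b * c + b * (M - c) by ring, Real.exp_add]; ring
  have hstart := mul_pos (Real.exp_pos (b * c)) hbpos
  calc (0:ℝ) < Real.exp (b*c) * (P0 zs * Real.exp (b * (M - c)) * (M - c) + C) := hstart
    _ = Real.exp (b*c) * C + P0 zs * Real.exp (b * M) * (M - c) := by rw [hzs]; ring
    _ ≤ (∑ z ∈ Finset.univ.erase zs, P0 z * Real.exp (b * s z) * (s z - c))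
        + P0 zs * Real.exp (b * M) * (M - c) := add_le_add_left hsum_low _
    _ = _ := by rw [hM]

private lemma aux_mono {Z : Type*} [Fintype Z] [Nonempty Z]
    (P0 : Z → ℝ) (hpos : ∀ z, 0 < P0 z) (s : Z → ℝ)
    (hs : ∃ z w : Z, s z ≠ s w) {a b : ℝ} (hab : a < b) :
    (∑ z, P0 z * Real.exp (a * s z) * s z) * (∑ z, P0 z * Real.exp (b * s z)) <
    (∑ z, P0 z * Real.exp (b * s z) * s z) * (∑ z, P0 z * Real.exp (a * s z)) := by
  obtain ⟨z0, w0, hzw⟩ := hs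
  have hpt : ∀ x y : ℝ, 0 ≤ (x - y) * (Real.exp (b*x + a*y) - Real.exp (a*x + b*y)) := by
    intro x y
    rcases le_total x y with h | h
    · apply mul_nonneg_of_nonpos_of_nonpos (by linarith)
      exact sub_nonpos.2 (Real.exp_le_exp.2 (by nlinarith))
    · exact mul_nonneg (by linarith) (sub_nonneg.2 (Real.exp_le_exp.2 (by nlinarith)))
  have hpt' : ∀ x y : ℝ, x ≠ y →
      0 < (x - y) * (Real.exp (b*x + a*y) - Real.exp (a*x + b*y)) := by
    intro x y hxy
    rcases lt_or_gt_of_ne hxy with h | h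
    · exact mul_pos_of_neg_of_neg (by linarith)
        (sub_neg.2 (Real.exp_lt_exp.2 (by nlinarith)))
    · exact mul_pos (by linarith) (sub_pos.2 (Real.exp_lt_exp.2 (by nlinarith)))
  set f : Z → Z → ℝ := fun z w =>
    P0 z * P0 w * ((s z - s w) * (Real.exp (b*s z + a*s w) - Real.exp (a*s z + b*s w)))
    with hf
  have hD : 0 < ∑ z, ∑ w, f z w := by
    apply Finset.sum_pos'
    · intro z _
      exact Finset.sum_nonneg fun w _ =>
        mul_nonneg (mul_nonneg (hpos z).le (hpos w).le) (hpt _ _)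
    · refine ⟨z0, Finset.mem_univ _, Finset.sum_pos' (fun w _ =>
        mul_nonneg (mul_nonneg (hpos z0).le (hpos w).le) (hpt _ _)) ?_⟩
      exact ⟨w0, Finset.mem_univ _,
        mul_pos (mul_pos (hpos z0) (hpos w0)) (hpt' _ _ hzw)⟩
  have hexp : ∑ z, ∑ w, f z w =
      2 * ((∑ z, P0 z * Real.exp (b * s z) * s z) * (∑ z, P0 z * Real.exp (a * s z))
        - (∑ z, P0 z * Real.exp (a * s z) * s z) * (∑ z, P0 z * Real.exp (b * s z))) := by
    have h1 : ∀ z w : Z, f z w =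
        (P0 z * Real.exp (b*s z) * s z) * (P0 w * Real.exp (a * s w))
        - (P0 z * Real.exp (b*s z)) * (P0 w * Real.exp (a * s w) * s w)
        - (P0 z * Real.exp (a*s z) * s z) * (P0 w * Real.exp (b * s w))
        + (P0 z * Real.exp (a*s z)) * (P0 w * Real.exp (b * s w) * s w) := by
      intro z w
      rw [hf]
      simp only [Real.exp_add]
      ring
    simp only [h1]
    simp only [Finset.sum_add_distrib, Finset.sum_sub_distrib, ← Finset.sum_mul,
      ← Finset.mul_sum]
    ring
  rw [hexp] at hD
  linarith

theorem exists_lambda_matching_moment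
    {Z : Type*} [Fintype Z] [Nonempty Z]
    (P0 : Z → ℝ) (hpos : ∀ z, 0 < P0 z) (hsum : ∑ z, P0 z = 1)
    (s : Z → ℝ) (c : ℝ)
    (hc1 : Finset.univ.inf' Finset.univ_nonempty s < c)
    (hc2 : c < Finset.univ.sup' Finset.univ_nonempty s)
    (E : ℝ → ℝ)
    (hE : ∀ lam, E lam = ∑ z,
      (P0 z * Real.exp (lam * s z) / (∑ z', P0 z' * Real.exp (lam * s z'))) * s z) :
    (∃ lam : ℝ, E lam = c) ∧
    ((∃ z z' : Z, s z ≠ s z') → ∃! lam : ℝ, E lam = c) := by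
  classical
  set F : ℝ → ℝ := fun l => ∑ z, P0 z * Real.exp (l * s z) with hFdef
  set G : ℝ → ℝ := fun l => ∑ z, P0 z * Real.exp (l * s z) * s z with hGdef
  have hF : ∀ l, 0 < F l := fun l =>
    Finset.sum_pos (fun z _ => mul_pos (hpos z) (Real.exp_pos _)) Finset.univ_nonempty
  have hE2 : ∀ l, E l = G l / F l := by
    intro l
    rw [hE l, hGdef, hFdef]
    simp only [div_mul_eq_mul_div]
    rw [← Finset.sum_div]
  -- continuity
  have hcontG : Continuous G := by
    apply continuous_finset_sum
    intro z _
    exact (continuous_const.mul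
      (Real.continuous_exp.comp (continuous_id.mul continuous_const))).mul continuous_const
  have hcontF : Continuous F := by
    apply continuous_finset_sum
    intro z _
    exact continuous_const.mul
      (Real.continuous_exp.comp (continuous_id.mul continuous_const))
  have hcont : Continuous E := by
    have : E = fun l => G l / F l := funext hE2
    rw [this]
    exact hcontG.div hcontF fun l => (hF l).ne'
  -- point above c
  obtain ⟨zs, _, hzs⟩ := Finset.exists_mem_eq_sup' Finset.univ_nonempty s
  obtain ⟨b, hb⟩ := aux_above P0 hpos s c zs (hzs ▸ hc2)
  have hEb : c < E b := by
    rw [hE2 b, lt_div_iff₀ (hF b)]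
    exact hb
  -- point below c
  obtain ⟨zi, _, hzi⟩ := Finset.exists_mem_eq_inf' Finset.univ_nonempty s
  have hzi' : s zi < c := hzi ▸ hc1
  obtain ⟨a0, ha0⟩ := aux_above P0 hpos (fun z => -s z) (-c) zi (by simpa using hzi')
  have e1 : ∑ z, P0 z * Real.exp (a0 * -s z) = F (-a0) := by
    apply Finset.sum_congr rfl
    intro z _
    rw [show a0 * -s z = -a0 * s z by ring]
  have e2 : ∑ z, P0 z * Real.exp (a0 * -s z) * -s z = -(G (-a0)) := by
    rw [hGdef, ← Finset.sum_neg_distrib]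
    apply Finset.sum_congr rfl
    intro z _
    rw [show a0 * -s z = -a0 * s z by ring]
    ring
  rw [e1, e2] at ha0
  have hEa : E (-a0) < c := by
    rw [hE2 (-a0), div_lt_iff₀ (hF (-a0))]
    linarith
  -- IVT
  have hmem : c ∈ Set.uIcc (E (-a0)) (E b) :=
    Set.mem_uIcc.2 (Or.inl ⟨hEa.le, hEb.le⟩)
  obtain ⟨lam, _, hlam⟩ := intermediate_value_uIcc hcont.continuousOn hmem
  refine ⟨⟨lam, hlam⟩, fun hs => ?_⟩
  have hmono : StrictMono E := by
    intro x y hxy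
    rw [hE2 x, hE2 y, div_lt_div_iff₀ (hF x) (hF y)]
    exact aux_mono P0 hpos s hs hxy
  exact ⟨lam, hlam, fun y hy => hmono.injective (by rw [hlam, hy])⟩
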